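/- There exist absolute constants c > 0, C > 0 and n₀ such that for every integer n ≥ n₀, the n-point set S = { (t/n, cos(t/√n), sin(t/√n)) : t ∈ {1, …, n} } satisfies: (i) any two distinct points of S whose parameters t, u satisfy |t − u| < 2π√n form a Delaunay edge of S, so S has at least c·n^{3/2} Delaunay edges; and (ii) the spread of S is at most C·√n. -/

import Mathlib

noncomputable section
open scoped Classical ENNReal Pointwise
open MeasureTheory Real

/-- Points of `ℝ³` as Euclidean space. -/
abbrev E3 : Type := EuclideanSpace ℝ (Fin 3)

/-- The point `(x, y, z) ∈ ℝ³`. -/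
def mk3 (x y z : ℝ) : E3 := (WithLp.equiv 2 (Fin 3 → ℝ)).symm ![x, y, z]

/-- `p` and `q` form a Delaunay edge of the finite set `S`: they are distinct points of `S`
lying on a sphere having no point of `S` in its interior. -/
def IsDelaunayEdge (S : Finset E3) (p q : E3) : Prop :=
  p ∈ S ∧ q ∈ S ∧ p ≠ q ∧
    ∃ (c : E3) (ρ : ℝ), 0 < ρ ∧ dist c p = ρ ∧ dist c q = ρ ∧ ∀ s ∈ S, ρ ≤ dist c s

/-- The number of (unordered) Delaunay edges of `S`. -/
def delaunayEdgeCount (S : Finset E3) : ℕ :=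
  Set.ncard {pq : E3 × E3 | IsDelaunayEdge S pq.1 pq.2} / 2

/-- The minimum pairwise distance of a finite point set. -/
def minPairDist (S : Finset E3) : ℝ :=
  sInf {d : ℝ | ∃ p ∈ S, ∃ q ∈ S, p ≠ q ∧ d = dist p q}

/-- The spread of a finite point set: diameter divided by minimum pairwise distance. -/
def spread (S : Finset E3) : ℝ := Metric.diam (S : Set E3) / minPairDist S
/-- The `t`-th point of the helical sample: `(t/n, cos(t/√n), sin(t/√n))`. -/
def helixPoint (n t : ℕ) : E3 :=
  mk3 ((t : ℝ) / n) (Real.cos (t / Real.sqrt n)) (Real.sin (t / Real.sqrt n))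

/-- The helical sample `S_√n = { (t/n, cos(t/√n), sin(t/√n)) : t ∈ {1, …, n} }`. -/
def helixSample (n : ℕ) : Finset E3 := (Finset.Icc 1 n).image (helixPoint n)

lemma dist_mk3_sq (x₁ y₁ z₁ x₂ y₂ z₂ : ℝ) :
    dist (mk3 x₁ y₁ z₁) (mk3 x₂ y₂ z₂) ^ 2
      = (x₁ - x₂) ^ 2 + (y₁ - y₂) ^ 2 + (z₁ - z₂) ^ 2 := by
  rw [EuclideanSpace.dist_eq, Real.sq_sqrt (by positivity)]
  rw [Fin.sum_univ_three]
  simp [mk3, Real.dist_eq, sq_abs]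

lemma isDelaunayEdge_symm {S : Finset E3} {p q : E3} (h : IsDelaunayEdge S p q) :
    IsDelaunayEdge S q p := by
  obtain ⟨h1, h2, h3, c, ρ, h4, h5, h6, h7⟩ := h
  exact ⟨h2, h1, h3.symm, c, ρ, h4, h6, h5, h7⟩

/-- Chord inequality for sin: for `0 ≤ c ≤ x ≤ π`, `c * sin x ≤ x * sin c`. -/
lemma chord_sin {c x : ℝ} (h0 : 0 ≤ c) (hcx : c ≤ x) (hx : x ≤ π) :
    c * Real.sin x ≤ x * Real.sin c := by
  rcases eq_or_lt_of_le (h0.trans hcx) with h | hxpos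
  · have : c = 0 := le_antisymm (h ▸ hcx) h0
    simp [this, ← h]
  · have ha : (0:ℝ) ≤ c / x := by positivity
    have hb : (0:ℝ) ≤ 1 - c / x := by
      rw [sub_nonneg]; exact div_le_one_of_le₀ hcx hxpos.le
    have hab : c / x + (1 - c / x) = 1 := by ring
    have key := strictConcaveOn_sin_Icc.concaveOn.2
      (Set.mem_Icc.2 ⟨(h0.trans hcx), hx⟩)
      (Set.mem_Icc.2 ⟨le_refl (0:ℝ), pi_pos.le⟩) ha hb hab
    simp only [smul_eq_mul, mul_zero, add_zero, Real.sin_zero] at key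
    have h1 : c / x * x = c := div_mul_cancel₀ c hxpos.ne'
    rw [h1] at key
    calc c * Real.sin x = (c / x * Real.sin x) * x := by field_simp
    _ ≤ Real.sin c * x := mul_le_mul_of_nonneg_right key hxpos.le
    _ = x * Real.sin c := mul_comm _ _

/-- Auxiliary: `2δ(1 + cos δ) ≤ 3π² sin δ` for `δ ∈ (0, π)`. -/
lemma key_far {δ : ℝ} (h0 : 0 < δ) (hπ : δ < π) :
    2 * δ * (1 + Real.cos δ) ≤ 3 * π ^ 2 * Real.sin δ := by
  have pipos := Real.pi_pos
  have hπ3 : (3:ℝ) < π := Real.pi_gt_three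
  have hs2 : Real.sin δ = 2 * Real.sin (δ / 2) * Real.cos (δ / 2) := by
    rw [show δ = 2 * (δ / 2) by ring, Real.sin_two_mul]
    ring_nf
  have hc2 : 1 + Real.cos δ = 2 * Real.cos (δ / 2) ^ 2 := by
    have h5 := Real.cos_sq (δ / 2)
    rw [show 2 * (δ / 2) = δ by ring] at h5
    linarith
  have hjordan : 2 / π * (δ / 2) ≤ Real.sin (δ / 2) :=
    Real.mul_le_sin (by linarith) (by linarith)
  have hcpos : 0 < Real.cos (δ / 2) :=
    Real.cos_pos_of_mem_Ioo ⟨by linarith, by linarith⟩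
  have hcle : Real.cos (δ / 2) ≤ 1 := Real.cos_le_one _
  have hspos : 0 < Real.sin (δ / 2) :=
    Real.sin_pos_of_pos_of_lt_pi (by linarith) (by linarith)
  have hδπs : δ ≤ π * Real.sin (δ / 2) := by
    have h6 : 2 / π * (δ / 2) = δ / π := by ring
    rw [h6, div_le_iff₀ pipos] at hjordan
    linarith [hjordan]
  have hππ : (0:ℝ) ≤ 6 * π ^ 2 - 4 * π := by nlinarith [hπ3]
  rw [hs2, hc2]
  nlinarith [mul_le_mul_of_nonneg_right hδπs (mul_nonneg hcpos.le hcpos.le),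
    mul_nonneg pipos.le (mul_nonneg (mul_nonneg hspos.le hcpos.le)
      (sub_nonneg.2 hcle)),
    mul_nonneg hππ (mul_nonneg hspos.le hcpos.le)]

/-- Master inequality for the far regime `t > 2π`. -/
lemma master_far {δ t : ℝ} (h0 : 0 < δ) (hπ : δ < π) (ht : 2 * π < t) :
    0 ≤ Real.sin δ * (t ^ 2 - δ ^ 2) + 2 * δ * (Real.cos t - Real.cos δ) := by
  have pipos := Real.pi_pos
  have sinδpos : 0 < Real.sin δ := Real.sin_pos_of_pos_of_lt_pi h0 hπ
  have hkey := key_far h0 hπ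
  have hco : -(1 + Real.cos δ) ≤ Real.cos t - Real.cos δ := by
    nlinarith [Real.neg_one_le_cos t]
  have hδ2 : δ ^ 2 ≤ π ^ 2 := by nlinarith
  have ht2 : 4 * π ^ 2 ≤ t ^ 2 := by nlinarith
  have e1 : Real.sin δ * (3 * π ^ 2) ≤ Real.sin δ * (t ^ 2 - δ ^ 2) := by
    apply mul_le_mul_of_nonneg_left _ sinδpos.le
    linarith
  have e2 : -(2 * δ * (1 + Real.cos δ)) ≤ 2 * δ * (Real.cos t - Real.cos δ) := by
    nlinarith [hco, h0]
  linarith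

/-- Master inequality, near regime: for `0 ≤ t ≤ 2π`,
`g(t) = sin δ * t² + 2δ cos t` is minimized at `t = δ`. -/
lemma master_near {δ t : ℝ} (h0 : 0 < δ) (hπ : δ < π) (ht0 : 0 ≤ t) (ht : t ≤ 2 * π) :
    0 ≤ Real.sin δ * (t ^ 2 - δ ^ 2) + 2 * δ * (Real.cos t - Real.cos δ) := by
  have pipos := Real.pi_pos
  have sinδpos : 0 < Real.sin δ := Real.sin_pos_of_pos_of_lt_pi h0 hπ
  set g : ℝ → ℝ := fun y => Real.sin δ * y ^ 2 + 2 * δ * Real.cos y with hgdef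
  have hg : ∀ y : ℝ, HasDerivAt g (Real.sin δ * (2 * y) - 2 * δ * Real.sin y) y := by
    intro y
    have h1 : HasDerivAt (fun y : ℝ => y ^ 2) (2 * y) y := by
      simpa using hasDerivAt_pow 2 y
    have h2 := (Real.hasDerivAt_cos y).const_mul (2 * δ)
    have h3 := (h1.const_mul (Real.sin δ)).add h2
    rw [show Real.sin δ * (2 * y) - 2 * δ * Real.sin y = Real.sin δ * (2 * y) + 2 * δ * -Real.sin y by ring]
    exact h3
  have hgoal : g δ ≤ g t →
      0 ≤ Real.sin δ * (t ^ 2 - δ ^ 2) + 2 * δ * (Real.cos t - Real.cos δ) := by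
    intro h; simp only [hgdef] at h; nlinarith [h]
  apply hgoal
  rcases le_or_gt t δ with htδ | htδ
  · have hanti : AntitoneOn g (Set.Icc 0 δ) := by
      apply antitoneOn_of_deriv_nonpos (convex_Icc 0 δ)
      · exact fun y _ => ((hg y).continuousAt).continuousWithinAt
      · intro y hy
        exact ((hg y).differentiableAt).differentiableWithinAt
      · intro y hy
        rw [interior_Icc] at hy
        obtain ⟨hy1, hy2⟩ := hy
        rw [(hg y).deriv]
        have := chord_sin hy1.le hy2.le hπ.le
        nlinarith [this]
    exact hanti (Set.mem_Icc.2 ⟨ht0, htδ⟩) (Set.mem_Icc.2 ⟨h0.le, le_refl δ⟩) htδ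
  · have hmono : MonotoneOn g (Set.Icc δ (2 * π)) := by
      apply monotoneOn_of_deriv_nonneg (convex_Icc δ (2 * π))
      · exact fun y _ => ((hg y).continuousAt).continuousWithinAt
      · intro y hy
        exact ((hg y).differentiableAt).differentiableWithinAt
      · intro y hy
        rw [interior_Icc] at hy
        obtain ⟨hy1, hy2⟩ := hy
        rw [(hg y).deriv]
        rcases le_or_gt y π with hyπ | hyπ
        · have := chord_sin h0.le hy1.le hyπ
          nlinarith [this]
        · have hsy : Real.sin y ≤ 0 := by
            have h4 : Real.sin (y - π) = -Real.sin y := Real.sin_sub_pi y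
            nlinarith [Real.sin_nonneg_of_nonneg_of_le_pi (by linarith : (0:ℝ) ≤ y - π)
              (by linarith : y - π ≤ π)]
          nlinarith [hsy, h0, sinδpos, hy1, mul_nonpos_of_nonneg_of_nonpos h0.le hsy]
    exact hmono (Set.mem_Icc.2 ⟨le_refl δ, by linarith⟩)
      (Set.mem_Icc.2 ⟨htδ.le, ht⟩) htδ.le

/-- Master inequality: for `δ ∈ (0, π)` and all `x`,
`sin δ * (x² - δ²) + 2δ(cos x - cos δ) ≥ 0`. -/
lemma master_ineq {δ : ℝ} (h0 : 0 < δ) (hπ : δ < π) (x : ℝ) :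
    0 ≤ Real.sin δ * (x ^ 2 - δ ^ 2) + 2 * δ * (Real.cos x - Real.cos δ) := by
  have habs : Real.sin δ * (x ^ 2 - δ ^ 2) + 2 * δ * (Real.cos x - Real.cos δ)
      = Real.sin δ * (|x| ^ 2 - δ ^ 2) + 2 * δ * (Real.cos |x| - Real.cos δ) := by
    rw [sq_abs, Real.cos_abs]
  rw [habs]
  rcases le_or_gt |x| (2 * π) with hcase | hcase
  · exact master_near h0 hπ (abs_nonneg x) hcase
  · exact master_far h0 hπ hcase

lemma helixPoint_eq (n v : ℕ) :
    helixPoint n v = mk3 ((v : ℝ) / n) (Real.cos (v / Real.sqrt n)) (Real.sin (v / Real.sqrt n)) :=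
  rfl

lemma helix_edge {n t u : ℕ} (ht : t ∈ Finset.Icc 1 n) (hu : u ∈ Finset.Icc 1 n)
    (htu : t < u) (hlt : (u : ℝ) - t < 2 * π * Real.sqrt n) :
    IsDelaunayEdge (helixSample n) (helixPoint n t) (helixPoint n u) := by
  obtain ⟨ht1, htn⟩ := Finset.mem_Icc.1 ht
  obtain ⟨hu1, hun⟩ := Finset.mem_Icc.1 hu
  have hn1 : 1 ≤ n := le_trans ht1 htn
  have hn0 : (0:ℝ) < n := by exact_mod_cast Nat.pos_of_ne_zero (by omega)
  set s : ℝ := Real.sqrt n with hs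
  have spos : 0 < s := Real.sqrt_pos.2 hn0
  have hs2 : s ^ 2 = n := Real.sq_sqrt hn0.le
  have htureal : (t : ℝ) < u := by exact_mod_cast htu
  set δ : ℝ := ((u : ℝ) - t) / (2 * s) with hδ
  have δpos : 0 < δ := by
    apply div_pos (by linarith) (by linarith)
  have δlt : δ < π := by
    rw [hδ, div_lt_iff₀ (by linarith)]
    calc (u:ℝ) - t < 2 * π * s := hlt
    _ = π * (2 * s) := by ring
  have sinpos : 0 < Real.sin δ := Real.sin_pos_of_pos_of_lt_pi δpos δlt
  set m : ℝ := ((t : ℝ) + u) / 2 with hm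
  set R : ℝ := δ / (n * Real.sin δ) with hR
  have Rpos : 0 < R := by positivity
  set c : E3 := mk3 (m / n) (-(R * Real.cos (m / s))) (-(R * Real.sin (m / s))) with hc
  -- squared distance from c to the helix point with parameter x
  have key : ∀ x : ℝ,
      (m / n - x / n) ^ 2 + (-(R * Real.cos (m / s)) - Real.cos (x / s)) ^ 2
        + (-(R * Real.sin (m / s)) - Real.sin (x / s)) ^ 2
      = ((x - m) / s) ^ 2 / n + 1 + R ^ 2 + 2 * R * Real.cos ((x - m) / s) := by
    intro x
    have hxm : (x - m) / s = x / s - m / s := by ring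
    have hcsub := Real.cos_sub (x / s) (m / s)
    have p1 := Real.sin_sq_add_cos_sq (x / s)
    have p2 := Real.sin_sq_add_cos_sq (m / s)
    have hsn : s ≠ 0 := spos.ne'
    have e2 : (m / n - x / n) ^ 2 = ((x - m) / s) ^ 2 / n := by
      rw [show (n:ℝ) = s ^ 2 from hs2.symm]
      field_simp
      ring
    rw [hxm, hcsub]
    linear_combination e2 + R ^ 2 * p2 + p1
  have distsq : ∀ v : ℕ, dist c (helixPoint n v) ^ 2
      = (((v : ℝ) - m) / s) ^ 2 / n + 1 + R ^ 2 + 2 * R * Real.cos (((v : ℝ) - m) / s) := by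
    intro v
    rw [helixPoint_eq, hc, dist_mk3_sq, ← hs]
    exact key v
  set ρ2 : ℝ := δ ^ 2 / n + 1 + R ^ 2 + 2 * R * Real.cos δ with hρ2
  have hρ2pos : 0 < ρ2 := by
    have h1 : 1 + R ^ 2 + 2 * R * Real.cos δ ≥ (1 - R) ^ 2 := by
      nlinarith [Real.neg_one_le_cos δ, Rpos]
    have h2 : δ ^ 2 / n > 0 := by positivity
    rw [hρ2]
    nlinarith [sq_nonneg (1 - R)]
  set ρ : ℝ := Real.sqrt ρ2 with hρ
  have ρpos : 0 < ρ := Real.sqrt_pos.2 hρ2pos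
  -- t and u are at distance exactly ρ
  have hxt : ((t : ℝ) - m) / s = -δ := by rw [hm, hδ]; ring
  have hxu : ((u : ℝ) - m) / s = δ := by rw [hm, hδ]; ring
  have distt : dist c (helixPoint n t) = ρ := by
    rw [show dist c (helixPoint n t) = Real.sqrt (dist c (helixPoint n t) ^ 2) from
      (Real.sqrt_sq dist_nonneg).symm, distsq t, hxt, Real.cos_neg, neg_sq, hρ, hρ2]
  have distu : dist c (helixPoint n u) = ρ := by
    rw [show dist c (helixPoint n u) = Real.sqrt (dist c (helixPoint n u) ^ 2) from
      (Real.sqrt_sq dist_nonneg).symm, distsq u, hxu, hρ]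
  -- all points are at distance at least ρ
  have hfar : ∀ p ∈ helixSample n, ρ ≤ dist c p := by
    intro p hp
    obtain ⟨v, hv, rfl⟩ := Finset.mem_image.1 hp
    rw [show dist c (helixPoint n v) = Real.sqrt (dist c (helixPoint n v) ^ 2) from
      (Real.sqrt_sq dist_nonneg).symm, distsq v, hρ]
    apply Real.sqrt_le_sqrt
    set x : ℝ := ((v : ℝ) - m) / s
    have hmaster := master_ineq δpos δlt x
    have hdiff : x ^ 2 / n + 2 * R * Real.cos x - (δ ^ 2 / n + 2 * R * Real.cos δ)
        = (Real.sin δ * (x ^ 2 - δ ^ 2) + 2 * δ * (Real.cos x - Real.cos δ)) / (n * Real.sin δ) := by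
      rw [hR]
      field_simp
      ring
    have : 0 ≤ x ^ 2 / n + 2 * R * Real.cos x - (δ ^ 2 / n + 2 * R * Real.cos δ) := by
      rw [hdiff]
      positivity
    rw [hρ2]
    linarith
  -- the two points are distinct
  have hne : helixPoint n t ≠ helixPoint n u := by
    intro h
    have h0 : (t : ℝ) / n = (u : ℝ) / n := congrArg (fun p : E3 => p 0) h
    have : (t : ℝ) = u := by
      field_simp at h0; exact_mod_cast h0
    exact htu.ne (by exact_mod_cast this)
  exact ⟨Finset.mem_image_of_mem _ ht, Finset.mem_image_of_mem _ hu, hne,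
    c, ρ, ρpos, distt, distu, hfar⟩

/-- Jordan-type: `|sin z| ≥ (2/π)|z|` for `|z| ≤ π/2`. -/
lemma abs_sin_ge {z : ℝ} (hz : |z| ≤ π / 2) : 2 / π * |z| ≤ |Real.sin z| := by
  rcases le_or_gt 0 z with h | h
  · rw [abs_of_nonneg h]
    calc 2 / π * z ≤ Real.sin z := Real.mul_le_sin h (by rwa [abs_of_nonneg h] at hz)
    _ ≤ |Real.sin z| := le_abs_self _
  · rw [abs_of_neg h]
    have h1 : Real.sin (-z) ≤ |Real.sin z| := by
      rw [Real.sin_neg]; exact neg_le_abs _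
    calc 2 / π * -z ≤ Real.sin (-z) :=
      Real.mul_le_sin (by linarith) (by rwa [abs_of_neg h] at hz)
    _ ≤ |Real.sin z| := h1

/-- Squared distance between two helix points. -/
lemma helix_dist_sq (n v w : ℕ) :
    dist (helixPoint n v) (helixPoint n w) ^ 2
      = (((v:ℝ) - w) / n) ^ 2 + 2 - 2 * Real.cos (((v:ℝ) - w) / Real.sqrt n) := by
  rw [helixPoint, helixPoint, dist_mk3_sq]
  have hsub : ((v:ℝ) - w) / Real.sqrt n = (v:ℝ) / Real.sqrt n - (w:ℝ) / Real.sqrt n := by ring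
  rw [hsub, Real.cos_sub]
  have p1 := Real.sin_sq_add_cos_sq ((v:ℝ) / Real.sqrt n)
  have p2 := Real.sin_sq_add_cos_sq ((w:ℝ) / Real.sqrt n)
  have e2 : ((v:ℝ) / n - (w:ℝ) / n) ^ 2 = (((v:ℝ) - w) / n) ^ 2 := by ring
  linear_combination e2 + p1 + p2

set_option maxHeartbeats 1000000 in
/-- Lower bound for the distance between distinct helix points. -/
lemma helix_dist_lb {n v w : ℕ} (hn : 1 ≤ n) (hvw : v ≠ w) :
    1 / (π * Real.sqrt n) ≤ dist (helixPoint n v) (helixPoint n w) := by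
  have hn0 : (0:ℝ) < n := by exact_mod_cast hn
  set s : ℝ := Real.sqrt n with hs
  have spos : 0 < s := Real.sqrt_pos.2 hn0
  have hs1 : 1 ≤ s := by
    rw [hs, show (1:ℝ) = Real.sqrt 1 by simp]
    exact Real.sqrt_le_sqrt (by exact_mod_cast hn)
  have hs2 : s ^ 2 = n := Real.sq_sqrt hn0.le
  have pipos := Real.pi_pos
  set y : ℝ := ((v:ℝ) - w) / s with hy
  clear_value y
  have hyabs : 1 / s ≤ |y| := by
    rw [hy, abs_div, abs_of_pos spos, div_le_div_iff_of_pos_right spos]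
    have h1 : (1:ℤ) ≤ |(v:ℤ) - w| := by
      apply Int.one_le_abs
      simp only [ne_eq, sub_eq_zero]
      exact_mod_cast hvw
    have : (1:ℝ) ≤ |(v:ℝ) - w| := by exact_mod_cast h1
    linarith
  -- key lower bound on the squared distance
  have hsq : 1 / (π ^ 2 * n) ≤ y ^ 2 / n + 2 - 2 * Real.cos y := by
    set k : ℤ := round (y / (2 * π)) with hk
    have hround : |y / (2 * π) - k| ≤ 1 / 2 := abs_sub_round _
    clear_value k
    have hyk : |y - 2 * π * k| ≤ π := by
      have heq : y - 2 * π * k = (y / (2 * π) - k) * (2 * π) := by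
        field_simp
      rw [heq, abs_mul, abs_of_pos (show (0:ℝ) < 2 * π by linarith)]
      nlinarith [hround, pipos]
    rcases le_or_gt (1 / (2 * s)) (|y - 2 * π * k|) with hcase | hcase
    · -- sin part is large
      have habs1 : |((-1:ℝ)) ^ k| = 1 := by
        rcases Int.even_or_odd k with hk' | hk'
        · rw [hk'.neg_one_zpow, abs_one]
        · rw [hk'.neg_one_zpow, abs_neg, abs_one]
      have hsin : |Real.sin (y / 2 - k * π)| = |Real.sin (y / 2)| := by
        rw [Real.sin_sub_int_mul_pi, abs_mul, habs1, one_mul]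
      have habs2 : |y / 2 - k * π| = |y - 2 * π * k| / 2 := by
        rw [show y / 2 - (k:ℝ) * π = (y - 2 * π * k) / 2 by ring, abs_div, abs_two]
      have hz : |y / 2 - k * π| ≤ π / 2 := by rw [habs2]; linarith
      have hzlb : 1 / (4 * s) ≤ |y / 2 - k * π| := by
        rw [habs2]
        have h8 : 1 / (4 * s) = (1 / (2 * s)) / 2 := by ring
        linarith
      have hj := abs_sin_ge hz
      rw [hsin] at hj
      have hsin2 : 2 / π * (1 / (4 * s)) ≤ |Real.sin (y / 2)| := by
        calc 2 / π * (1 / (4 * s)) ≤ 2 / π * |y / 2 - k * π| := by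
              apply mul_le_mul_of_nonneg_left hzlb (by positivity)
        _ ≤ |Real.sin (y / 2)| := hj
      have hcos : 2 - 2 * Real.cos y = 4 * Real.sin (y / 2) ^ 2 := by
        have h5 := Real.cos_sq (y / 2)
        rw [show 2 * (y / 2) = y by ring] at h5
        have p := Real.sin_sq_add_cos_sq (y / 2)
        nlinarith [h5, p]
      have hsq2 : (2 / π * (1 / (4 * s))) ^ 2 ≤ Real.sin (y / 2) ^ 2 := by
        rw [← sq_abs (Real.sin (y / 2))]
        exact pow_le_pow_left₀ (by positivity) hsin2 2
      have hexp : (2 / π * (1 / (4 * s))) ^ 2 = 1 / (4 * π ^ 2 * n) := by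
        rw [← hs2]; field_simp; ring
      rw [hexp] at hsq2
      have hy2n : 0 ≤ y ^ 2 / n := by positivity
      have heq4 : (4:ℝ) * (1 / (4 * π ^ 2 * n)) = 1 / (π ^ 2 * n) := by
        field_simp
      linarith [hcos, hsq2, hy2n]
    · -- y is near a large multiple of 2π, so |y| ≥ π
      have hk0 : k ≠ 0 := by
        intro h
        rw [h] at hcase
        simp only [Int.cast_zero, mul_zero, sub_zero] at hcase
        have h2 : 1 / (2 * s) < 1 / s := by
          rw [div_lt_div_iff_of_pos_left one_pos (by linarith) spos]
          linarith
        linarith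
      have hkabs : (1:ℝ) ≤ |(k:ℝ)| := by
        have := Int.one_le_abs hk0
        calc (1:ℝ) = ((1:ℤ):ℝ) := by norm_num
        _ ≤ ((|k|:ℤ):ℝ) := by exact_mod_cast this
        _ = |(k:ℝ)| := by push_cast; ring
      have hybig : π ≤ |y| := by
        have h1 : |2 * π * k| - |y| ≤ |2 * π * k - y| := abs_sub_abs_le_abs_sub _ _
        rw [abs_sub_comm] at h1
        have h2 : 2 * π ≤ |2 * π * (k:ℝ)| := by
          rw [abs_mul, abs_of_pos (by linarith : (0:ℝ) < 2 * π)]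
          nlinarith [hkabs, pipos]
        have h3 : 1 / (2 * s) ≤ 1 / 2 := by
          rw [div_le_div_iff₀ (by linarith) two_pos]
          linarith
        linarith
      have hy2 : π ^ 2 ≤ y ^ 2 := by
        rw [← sq_abs y]
        nlinarith [hybig, pipos, abs_nonneg y]
      have hcos : 2 - 2 * Real.cos y ≥ 0 := by nlinarith [Real.cos_le_one y]
      have hp2 : (9:ℝ) ≤ π ^ 2 := by nlinarith [Real.pi_gt_three]
      have hp4 : (1:ℝ) ≤ π ^ 2 * π ^ 2 := by nlinarith
      have hpi4 : 1 / (π ^ 2 * n) ≤ π ^ 2 / n := by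
        rw [div_le_div_iff₀ (by positivity) hn0]
        nlinarith [mul_le_mul_of_nonneg_right hp4 hn0.le]
      have h10 : π ^ 2 / (n:ℝ) ≤ y ^ 2 / n := by gcongr
      linarith
  -- conclude
  have hdsq := helix_dist_sq n v w
  have harg : ((v:ℝ) - w) / Real.sqrt n = y := by rw [hy, hs]
  have hconv : (((v:ℝ) - w) / n) ^ 2 = y ^ 2 / n := by
    rw [hy, div_pow, div_pow, hs2, div_div, sq]
    ring
  rw [harg, hconv] at hdsq
  have hfin : 1 / (π ^ 2 * n) ≤ dist (helixPoint n v) (helixPoint n w) ^ 2 := by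
    rw [hdsq]; linarith [hsq]
  have hform : (1 / (π * s)) ^ 2 = 1 / (π ^ 2 * n) := by
    rw [← hs2]; field_simp
  calc 1 / (π * s) = Real.sqrt ((1 / (π * s)) ^ 2) := (Real.sqrt_sq (by positivity)).symm
  _ = Real.sqrt (1 / (π ^ 2 * n)) := by rw [hform]
  _ ≤ Real.sqrt (dist (helixPoint n v) (helixPoint n w) ^ 2) := Real.sqrt_le_sqrt hfin
  _ = dist (helixPoint n v) (helixPoint n w) := Real.sqrt_sq dist_nonneg

lemma helixPoint_inj {n v w : ℕ} (hn : 1 ≤ n) (h : helixPoint n v = helixPoint n w) :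
    v = w := by
  have hn0 : (0:ℝ) < n := by exact_mod_cast Nat.pos_of_ne_zero (by omega)
  have h0 : (v : ℝ) / n = (w : ℝ) / n := congrArg (fun p : E3 => p 0) h
  have : (v : ℝ) = w := by
    field_simp at h0; exact_mod_cast h0
  exact_mod_cast this

/-- Diameter bound. -/
lemma helix_diam (n : ℕ) : Metric.diam ((helixSample n : Finset E3) : Set E3) ≤ 3 := by
  apply Metric.diam_le_of_forall_dist_le (by norm_num)
  intro p hp q hq
  rw [Finset.mem_coe] at hp hq
  obtain ⟨v, hv, rfl⟩ := Finset.mem_image.1 hp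
  obtain ⟨w, hw, rfl⟩ := Finset.mem_image.1 hq
  obtain ⟨hv1, hvn⟩ := Finset.mem_Icc.1 hv
  obtain ⟨hw1, hwn⟩ := Finset.mem_Icc.1 hw
  have hn0 : (0:ℝ) < n := by exact_mod_cast Nat.pos_of_ne_zero (by omega)
  have h1 : |(v:ℝ) - w| ≤ n := by
    rw [abs_le]
    constructor
    · have : (w:ℝ) ≤ n := by exact_mod_cast hwn
      have : (0:ℝ) ≤ v := by positivity
      linarith
    · have : (v:ℝ) ≤ n := by exact_mod_cast hvn
      have : (0:ℝ) ≤ w := by positivity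
      linarith
  have h2 : (((v:ℝ) - w) / n) ^ 2 ≤ 1 := by
    rw [div_pow, div_le_one (by positivity), ← sq_abs]
    nlinarith [h1, abs_nonneg ((v:ℝ) - w)]
  have h3 := Real.neg_one_le_cos (((v:ℝ) - w) / Real.sqrt n)
  have hsq : dist (helixPoint n v) (helixPoint n w) ^ 2 ≤ 9 := by
    rw [helix_dist_sq]
    linarith
  calc dist (helixPoint n v) (helixPoint n w)
      = Real.sqrt (dist (helixPoint n v) (helixPoint n w) ^ 2) :=
        (Real.sqrt_sq dist_nonneg).symm
  _ ≤ Real.sqrt 9 := Real.sqrt_le_sqrt hsq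
  _ = 3 := by
      rw [show (9:ℝ) = 3 ^ 2 by norm_num, Real.sqrt_sq (by norm_num)]

/-- Minimum pairwise distance lower bound. -/
lemma helix_minPairDist {n : ℕ} (hn : 2 ≤ n) :
    1 / (π * Real.sqrt n) ≤ minPairDist (helixSample n) := by
  have hn1 : 1 ≤ n := by omega
  apply le_csInf
  · refine ⟨dist (helixPoint n 1) (helixPoint n 2), helixPoint n 1, ?_, helixPoint n 2, ?_, ?_, rfl⟩
    · exact Finset.mem_image_of_mem _ (Finset.mem_Icc.2 ⟨le_refl 1, hn1⟩)
    · exact Finset.mem_image_of_mem _ (Finset.mem_Icc.2 ⟨by omega, hn⟩)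
    · intro h
      exact absurd (helixPoint_inj hn1 h) (by omega)
  · rintro b ⟨p, hp, q, hq, hpq, rfl⟩
    obtain ⟨v, hv, rfl⟩ := Finset.mem_image.1 hp
    obtain ⟨w, hw, rfl⟩ := Finset.mem_image.1 hq
    have hvw : v ≠ w := fun h => hpq (by rw [h])
    exact helix_dist_lb hn1 hvw

/-- Spread bound. -/
lemma helix_spread {n : ℕ} (hn : 2 ≤ n) : spread (helixSample n) ≤ 10 * Real.sqrt n := by
  have hn0 : (0:ℝ) < n := by exact_mod_cast (by omega : 0 < n)
  have spos : 0 < Real.sqrt n := Real.sqrt_pos.2 hn0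
  have pipos := Real.pi_pos
  have hμ : (0:ℝ) < 1 / (π * Real.sqrt n) := by positivity
  have hmin := helix_minPairDist hn
  have hdiam := helix_diam n
  have hd0 : (0:ℝ) ≤ Metric.diam ((helixSample n : Finset E3) : Set E3) := Metric.diam_nonneg
  rw [spread]
  calc Metric.diam ((helixSample n : Finset E3) : Set E3) / minPairDist (helixSample n)
      ≤ 3 / (1 / (π * Real.sqrt n)) := by
        apply div_le_div₀ (by norm_num) hdiam hμ hmin
  _ = 3 * (π * Real.sqrt n) := by
        rw [div_div_eq_mul_div, div_one]
  _ ≤ 10 * Real.sqrt n := by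
        nlinarith [Real.pi_lt_d2, spos]

set_option maxHeartbeats 1000000 in
/-- Count lower bound. -/
lemma helix_count {n : ℕ} (hn : 16 ≤ n) :
    (1 / 16 : ℝ) * (n : ℝ) ^ ((3 : ℝ) / 2) ≤ (delaunayEdgeCount (helixSample n) : ℝ) := by
  have hn1 : 1 ≤ n := by omega
  have hn0 : (0:ℝ) < n := by exact_mod_cast (by omega : 0 < n)
  have spos : 0 < Real.sqrt n := Real.sqrt_pos.2 hn0
  set D : ℕ := Nat.sqrt n with hD
  have hD1 : 1 ≤ D := by
    have := Nat.sqrt_pos.2 (show 0 < n by omega)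
    omega
  have hDn : D ≤ n := Nat.sqrt_le_self n
  have hDreal : (D : ℝ) ≤ Real.sqrt n := by
    have h0 : D ^ 2 ≤ n := by rw [hD]; exact Nat.sqrt_le' n
    have h1 : (D : ℝ) ^ 2 ≤ n := by exact_mod_cast h0
    calc (D : ℝ) = Real.sqrt ((D : ℝ) ^ 2) := (Real.sqrt_sq (by positivity)).symm
    _ ≤ Real.sqrt n := Real.sqrt_le_sqrt h1
  have hDlb : Real.sqrt n - 1 ≤ (D : ℝ) := by
    have h1 : n < (D + 1) ^ 2 := by rw [hD]; exact Nat.lt_succ_sqrt' n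
    have h2 : (n : ℝ) < ((D : ℝ) + 1) ^ 2 := by exact_mod_cast h1
    have h3 : Real.sqrt n < (D : ℝ) + 1 := by
      rw [show ((D:ℝ) + 1) = Real.sqrt (((D:ℝ)+1)^2) from (Real.sqrt_sq (by positivity)).symm]
      exact Real.sqrt_lt_sqrt hn0.le h2
    linarith
  -- the injection
  set A : Finset (ℕ × ℕ) := (Finset.Icc 1 (n - D)) ×ˢ (Finset.Icc 1 D) with hA
  set f : ℕ × ℕ → E3 × E3 := fun p => (helixPoint n p.1, helixPoint n (p.1 + p.2)) with hf
  set DS : Set (E3 × E3) := {pq : E3 × E3 | IsDelaunayEdge (helixSample n) pq.1 pq.2} with hDS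
  have hmem : ∀ p ∈ (A : Set (ℕ × ℕ)), f p ∈ DS := by
    rintro ⟨t, d⟩ hp
    rw [Finset.mem_coe, hA, Finset.mem_product] at hp
    obtain ⟨hpt, hpd⟩ := hp
    obtain ⟨ht1, ht2⟩ := Finset.mem_Icc.1 hpt
    obtain ⟨hd1, hd2⟩ := Finset.mem_Icc.1 hpd
    apply helix_edge
    · exact Finset.mem_Icc.2 ⟨ht1, by omega⟩
    · exact Finset.mem_Icc.2 ⟨by omega, by omega⟩
    · omega
    · have hdD : (d : ℝ) ≤ D := by exact_mod_cast hd2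
      have : ((t + d : ℕ) : ℝ) - t = d := by push_cast; ring
      rw [this]
      have h2π : (1:ℝ) < 2 * π := by nlinarith [Real.pi_gt_three]
      calc (d : ℝ) ≤ Real.sqrt n := le_trans hdD hDreal
      _ < 2 * π * Real.sqrt n := by nlinarith [h2π, spos]
  have hinj : Set.InjOn f (A : Set (ℕ × ℕ)) := by
    rintro ⟨t1, d1⟩ h1 ⟨t2, d2⟩ h2 heq
    rw [hf] at heq
    simp only [Prod.mk.injEq] at heq
    have e1 : t1 = t2 := helixPoint_inj hn1 heq.1
    have e2 : t1 + d1 = t2 + d2 := helixPoint_inj hn1 heq.2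
    simp only [Prod.mk.injEq]
    omega
  have hfin : DS.Finite := by
    apply Set.Finite.subset ((helixSample n ×ˢ helixSample n).finite_toSet)
    rintro ⟨p, q⟩ hpq
    rw [hDS, Set.mem_setOf_eq] at hpq
    rw [Finset.coe_product]
    exact ⟨hpq.1, hpq.2.1⟩
  have hcardA : A.card = (n - D) * D := by
    rw [hA, Finset.card_product, Nat.card_Icc, Nat.card_Icc]
    simp
  have hcard : (n - D) * D ≤ DS.ncard := by
    calc (n - D) * D = A.card := hcardA.symm
    _ = (A : Set (ℕ × ℕ)).ncard := (Set.ncard_coe_finset A).symm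
    _ = (f '' (A : Set (ℕ × ℕ))).ncard := (Set.ncard_image_of_injOn hinj).symm
    _ ≤ DS.ncard := Set.ncard_le_ncard (Set.image_subset_iff.2 hmem) hfin
  have hcount : (n - D) * D / 2 ≤ delaunayEdgeCount (helixSample n) := by
    rw [delaunayEdgeCount]
    exact Nat.div_le_div_right hcard
  -- pass to the reals
  set M : ℕ := (n - D) * D with hM
  have hM2 : M ≤ 2 * (M / 2) + 1 := by omega
  have hcR : ((M : ℝ) - 1) / 2 ≤ (delaunayEdgeCount (helixSample n) : ℝ) := by
    have h1 : ((M / 2 : ℕ) : ℝ) ≤ (delaunayEdgeCount (helixSample n) : ℝ) := by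
      exact_mod_cast hcount
    have h2 : (M : ℝ) ≤ 2 * ((M / 2 : ℕ) : ℝ) + 1 := by exact_mod_cast hM2
    linarith
  -- arithmetic
  have hs4 : 4 ≤ Real.sqrt n := by
    calc (4:ℝ) = Real.sqrt 16 := by
          rw [show (16:ℝ) = 4 ^ 2 by norm_num, Real.sqrt_sq (by norm_num)]
    _ ≤ Real.sqrt n := Real.sqrt_le_sqrt (by exact_mod_cast hn)
  have hss : Real.sqrt n * Real.sqrt n = n := Real.mul_self_sqrt hn0.le
  have hsn4 : Real.sqrt n ≤ (n : ℝ) / 4 := by nlinarith [hs4, hss]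
  have hDr : (3 / 4 : ℝ) * Real.sqrt n ≤ (D : ℝ) := by nlinarith [hDlb, hs4]
  have hndr : ((n - D : ℕ) : ℝ) = (n : ℝ) - D := by
    push_cast [Nat.cast_sub hDn]; ring
  have hnd_lb : (3 / 4 : ℝ) * n ≤ ((n - D : ℕ) : ℝ) := by
    rw [hndr]
    have : (D : ℝ) ≤ (n:ℝ) / 4 := le_trans hDreal hsn4
    linarith
  have hMr : (9 / 16 : ℝ) * ((n:ℝ) * Real.sqrt n) ≤ (M : ℝ) := by
    have : (M : ℝ) = ((n - D : ℕ) : ℝ) * (D : ℝ) := by rw [hM]; push_cast; ring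
    rw [this]
    have h1 : (0:ℝ) ≤ (3/4:ℝ) * n := by positivity
    have h2 : (0:ℝ) ≤ (3/4:ℝ) * Real.sqrt n := by positivity
    calc (9/16 : ℝ) * ((n:ℝ) * Real.sqrt n)
        = ((3/4:ℝ) * n) * ((3/4:ℝ) * Real.sqrt n) := by ring
    _ ≤ ((n - D : ℕ) : ℝ) * (D : ℝ) := by
        apply mul_le_mul hnd_lb hDr h2 (by positivity)
  have hrpow : (n : ℝ) ^ ((3 : ℝ) / 2) = (n : ℝ) * Real.sqrt n := by
    rw [show (3:ℝ)/2 = 1 + 1/2 by norm_num, Real.rpow_add hn0, Real.rpow_one,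
      ← Real.sqrt_eq_rpow]
  rw [hrpow]
  have hbig : (64:ℝ) ≤ (n:ℝ) * Real.sqrt n := by nlinarith [hs4, hss, hn0]
  linarith [hcR, hMr, hbig]

/-- For all sufficiently large `n`, in the `n`-point helical sample `S_√n`:
(i) any two distinct points whose parameters differ by less than `2π√n` form a Delaunay
edge, so `S_√n` has at least `c·n^{3/2}` Delaunay edges; and (ii) the spread of `S_√n` is at
most `C·√n`. -/
theorem helixSample_spread_sqrt_lowerbound :
    ∃ c : ℝ, 0 < c ∧ ∃ C : ℝ, 0 < C ∧ ∃ n₀ : ℕ, ∀ n : ℕ, n₀ ≤ n →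
      ((∀ t ∈ Finset.Icc 1 n, ∀ u ∈ Finset.Icc 1 n, t ≠ u →
          |(t : ℝ) - (u : ℝ)| < 2 * Real.pi * Real.sqrt n →
          IsDelaunayEdge (helixSample n) (helixPoint n t) (helixPoint n u)) ∧
        c * (n : ℝ) ^ ((3 : ℝ) / 2) ≤ (delaunayEdgeCount (helixSample n) : ℝ)) ∧
      spread (helixSample n) ≤ C * Real.sqrt n := by
  refine ⟨1 / 16, by norm_num, 10, by norm_num, 16, fun n hn => ?_⟩
  refine ⟨⟨?_, helix_count hn⟩, helix_spread (by omega)⟩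
  intro t ht u hu htu habs
  rcases lt_or_gt_of_ne htu with h | h
  · apply helix_edge ht hu h
    have h1 : (t:ℝ) < u := by exact_mod_cast h
    have h2 : |(t : ℝ) - (u : ℝ)| = (u:ℝ) - t := by
      rw [abs_sub_comm, abs_of_pos (by linarith)]
    linarith [habs, h2.symm.le, h2 ▸ habs]
  · apply isDelaunayEdge_symm
    apply helix_edge hu ht h
    have h1 : (u:ℝ) < t := by exact_mod_cast h
    have h2 : |(t : ℝ) - (u : ℝ)| = (t:ℝ) - u := by
      rw [abs_of_pos (by linarith)]
    linarith [habs, h2 ▸ habs]
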